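/- arXiv:2106.10513 — 2 statements merged into one kernel-verified Lean document; each statement's English description precedes it below -/
import Mathlib

section
/- Let G be a strongly connected directed graph on n nodes with Laplacian L, and let A_d = diag(a₁, …, a_n) be a nonnegative diagonal matrix with at least one aᵢ > 0 in every 'reachability class'; in particular assume every node either has aᵢ > 0 or has a directed path from some node with positive a. Let Γ = diag(1/(dᵢ + aᵢ)) where dᵢ is the in-degree of node i and dᵢ + aᵢ > 0 for all i. Then M = I − Γ(L + A_d) is Schur stable. -/
/-- For a strongly connected digraph with Laplacian `L`, a nonnegative
diagonal matrix `A_d = diag(a)` such that every node either has `aᵢ > 0` or is reached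
by a directed path from a node with positive `a`, and `Γ = diag(1/(dᵢ + aᵢ))` with
`dᵢ + aᵢ > 0`, the leader-following consensus matrix `M = I - Γ(L + A_d)` is Schur
stable. Here `adj j i` means there is an edge from `j` to `i`, and `dᵢ` is the
in-degree of node `i`. -/
theorem leader_following_matrix_schur_stable
    (n : ℕ) (hn : 0 < n) (adj : Fin n → Fin n → Bool)
    (hirrefl : ∀ i, adj i i = false)
    (hconn : ∀ i j : Fin n, i ≠ j →
      Relation.TransGen (fun a b : Fin n => adj a b = true) i j)
    (a : Fin n → ℝ) (ha : ∀ i, 0 ≤ a i)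
    (hreach : ∀ i : Fin n, 0 < a i ∨ ∃ j : Fin n, 0 < a j ∧
      Relation.TransGen (fun p q : Fin n => adj p q = true) j i)
    (d : Fin n → ℝ)
    (hd : ∀ i, d i = ((Finset.univ.filter (fun j => adj j i = true)).card : ℝ))
    (hpos : ∀ i, 0 < d i + a i)
    (L : Matrix (Fin n) (Fin n) ℝ)
    (hL : ∀ i j, L i j = if i = j then d i else (if adj j i then -1 else 0))
    (M : Matrix (Fin n) (Fin n) ℝ)
    (hM : ∀ i j, M i j = (if i = j then 1 else 0)
      - (L i j + if i = j then a i else 0) / (d i + a i)) :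
    ∀ μ ∈ spectrum ℂ (M.map (Complex.ofReal)), ‖μ‖ < 1 := by
  have hM' : ∀ i j, M i j = if adj j i then (d i + a i)⁻¹ else 0 := by
    intro i j
    rw [hM, hL]
    by_cases hij : i = j
    · subst hij
      simp [hirrefl i, div_self (ne_of_gt (hpos i))]
    · simp only [hij, if_false]
      by_cases hadj : adj j i
      · simp [hadj]
        field_simp
      · simp [hadj]
  have hMnn : ∀ i j, 0 ≤ M i j := by
    intro i j
    rw [hM']
    split
    · exact le_of_lt (inv_pos.mpr (hpos i))
    · exact le_rfl
  have hdnn : ∀ i, 0 ≤ d i := by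
    intro i; rw [hd]; positivity
  have hrow : ∀ i, ∑ j, M i j = d i / (d i + a i) := by
    intro i
    have : ∑ j, M i j = ∑ j ∈ Finset.univ.filter (fun j => adj j i = true), (d i + a i)⁻¹ := by
      rw [Finset.sum_filter]
      exact Finset.sum_congr rfl (fun j _ => hM' i j)
    rw [this, Finset.sum_const, nsmul_eq_mul, ← hd, div_eq_mul_inv]
  have hrow_le : ∀ i, d i / (d i + a i) ≤ 1 := by
    intro i
    rw [div_le_one (hpos i)]
    linarith [ha i]
  -- extract eigenvector
  intro μ hμ
  rw [spectrum.mem_iff] at hμ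
  set Mc := M.map (Complex.ofReal) with hMc
  have hdet : (μ • (1 : Matrix (Fin n) (Fin n) ℂ) - Mc).det = 0 := by
    by_contra h
    exact hμ (by
      rw [Algebra.algebraMap_eq_smul_one]
      exact (Matrix.isUnit_iff_isUnit_det _).mpr (isUnit_iff_ne_zero.mpr h))
  obtain ⟨v, hv0, hveq⟩ := Matrix.exists_mulVec_eq_zero_iff.mpr hdet
  have heig : ∀ i, μ * v i = ∑ j, (M i j : ℂ) * v j := by
    intro i
    have h1 := congrFun hveq i
    simp only [Matrix.sub_mulVec, Matrix.smul_mulVec, Matrix.one_mulVec,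
      Pi.sub_apply, Pi.smul_apply, smul_eq_mul, Pi.zero_apply, sub_eq_zero] at h1
    rw [h1, Matrix.mulVec, dotProduct]
    exact Finset.sum_congr rfl (fun j _ => by simp [hMc, Matrix.map_apply])
  -- sup of |v|
  have hune : (Finset.univ : Finset (Fin n)).Nonempty := ⟨⟨0, hn⟩, Finset.mem_univ _⟩
  set S := Finset.univ.sup' hune (fun i => ‖v i‖) with hS
  have hSle : ∀ j, ‖v j‖ ≤ S := fun j =>
    Finset.le_sup' (fun i => ‖v i‖) (Finset.mem_univ j)
  have hSpos : 0 < S := by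
    obtain ⟨k, hk⟩ := Function.ne_iff.mp hv0
    exact lt_of_lt_of_le (by simpa using hk) (hSle k)
  by_contra hμ1
  push_neg at hμ1
  -- key claim
  have key : ∀ i, ‖v i‖ = S →
      a i = 0 ∧ ∀ j, adj j i = true → ‖v j‖ = S := by
    intro i hi
    have h1 : S ≤ ∑ j, M i j * ‖v j‖ := by
      calc S = ‖v i‖ := hi.symm
        _ ≤ ‖μ‖ * ‖v i‖ := by
            nlinarith [norm_nonneg (v i), hμ1]
        _ = ‖μ * v i‖ := (norm_mul μ (v i)).symm
        _ = ‖∑ j, (M i j : ℂ) * v j‖ := by rw [heig i]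
        _ ≤ ∑ j, ‖(M i j : ℂ) * v j‖ := norm_sum_le _ _
        _ = ∑ j, M i j * ‖v j‖ := by
            refine Finset.sum_congr rfl (fun j _ => ?_)
            rw [norm_mul, Complex.norm_real, Real.norm_eq_abs, abs_of_nonneg (hMnn i j)]
    have h2 : ∑ j, M i j * ‖v j‖ ≤ ∑ j, M i j * S :=
      Finset.sum_le_sum (fun j _ => mul_le_mul_of_nonneg_left (hSle j) (hMnn i j))
    have h3 : ∑ j, M i j * S = (d i / (d i + a i)) * S := by
      rw [← Finset.sum_mul, hrow]
    have ha0 : a i = 0 := by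
      have : S ≤ (d i / (d i + a i)) * S := by linarith
      have h4 : 1 ≤ d i / (d i + a i) := by
        nlinarith
      rw [le_div_iff₀ (hpos i)] at h4
      linarith [ha i]
    refine ⟨ha0, fun j hadj => ?_⟩
    by_contra hne
    have hlt : ‖v j‖ < S := lt_of_le_of_ne (hSle j) hne
    have hMpos : 0 < M i j := by
      rw [hM', hadj, if_pos rfl]
      exact inv_pos.mpr (hpos i)
    have hstrict : ∑ k, M i k * ‖v k‖ < ∑ k, M i k * S :=
      Finset.sum_lt_sum (fun k _ => mul_le_mul_of_nonneg_left (hSle k) (hMnn i k))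
        ⟨j, Finset.mem_univ j, by nlinarith⟩
    rw [h3, ha0, add_zero, div_self (by linarith [hpos i, ha i] : d i ≠ 0), one_mul] at hstrict
    linarith
  -- propagate along paths
  have prop : ∀ j i, Relation.TransGen (fun p q : Fin n => adj p q = true) j i →
      ‖v i‖ = S → ‖v j‖ = S := by
    intro j i h
    induction h with
    | single h' => exact fun hi => (key _ hi).2 j h'
    | tail _ h' ih => exact fun hc => ih ((key _ hc).2 _ h')
  obtain ⟨i₀, _, hi₀⟩ := Finset.exists_mem_eq_sup' hune (fun i => ‖v i‖)
  rcases hreach i₀ with hpi | ⟨j, haj, hpath⟩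
  · have := (key i₀ hi₀.symm).1
    linarith
  · have hvj : ‖v j‖ = S := prop j i₀ hpath hi₀.symm
    have := (key j hvj).1
    linarith
end

section
/- Consider steady-state equations: x = Rx − (α/n)(I ⊗ 1ᵀ)ψ and ψ = (C ⊗ I)ψ, where R is row-stochastic irreducible with normalized left eigenvector uᵀ (uᵀ1 = n), C is column-stochastic irreducible with normalized right eigenvector v (1ᵀv = n), α > 0, and uᵀv ≠ 0. Then ψ = v ⊗ ψ̄ with ψ̄ = (1/n)(1ᵀ ⊗ I)ψ satisfying 1ᵀψ̄ = 0, and x = τ·1 for some scalar τ, i.e., the steady state is a consensus state. -/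
open Matrix

lemma consensus_of_fixed {n : ℕ} (M : Matrix (Fin n) (Fin n) ℝ)
    (hnn : ∀ i j, 0 ≤ M i j) (hrow : ∀ i, ∑ j, M i j = 1)
    (hirr : ∀ i j : Fin n, i ≠ j →
      Relation.TransGen (fun a b : Fin n => 0 < M b a) i j)
    (x : Fin n → ℝ) (hx : ∀ i, x i = ∑ j, M i j * x j) :
    ∀ i j, x i = x j := by
  have key : ∀ i j : Fin n, x j ≤ x i := by
    intro i j
    obtain ⟨i0, -, hmax⟩ := Finset.exists_max_image Finset.univ x ⟨i, Finset.mem_univ i⟩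
    have hmax' : ∀ k, x k ≤ x i0 := fun k => hmax k (Finset.mem_univ k)
    have step : ∀ b a : Fin n, x b = x i0 → 0 < M b a → x a = x i0 := by
      intro b a hb hMba
      have hsum : ∑ j, M b j * x j = ∑ j, M b j * x i0 := by
        rw [← Finset.sum_mul, hrow, one_mul, ← hb, hx b]
      have hle : ∀ j ∈ Finset.univ, M b j * x j ≤ M b j * x i0 :=
        fun j _ => mul_le_mul_of_nonneg_left (hmax' j) (hnn b j)
      have heach := (Finset.sum_eq_sum_iff_of_le hle).mp hsum a (Finset.mem_univ a)
      exact mul_left_cancel₀ (ne_of_gt hMba) heach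
    have prop : ∀ a : Fin n,
        Relation.TransGen (fun a b : Fin n => 0 < M b a) a i0 → x a = x i0 := by
      intro a h
      induction h using Relation.TransGen.head_induction_on with
      | single h => exact step _ _ rfl h
      | head h _ ih => exact step _ _ ih h
    have hall : ∀ k : Fin n, x k = x i0 := by
      intro k
      by_cases hk : k = i0
      · rw [hk]
      · exact prop k (hirr k i0 hk)
    rw [hall i, hall j]
  intro i j
  exact le_antisymm (key j i) (key i j)

lemma fixed_eq_smul {n : ℕ} (hn : 0 < n) (C : Matrix (Fin n) (Fin n) ℝ)
    (hnn : ∀ i j, 0 ≤ C i j) (hcol : ∀ j, ∑ i, C i j = 1)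
    (hirr : ∀ i j : Fin n, i ≠ j →
      Relation.TransGen (fun a b : Fin n => 0 < C b a) i j)
    (v : Fin n → ℝ) (hv : C.mulVec v = v) (hvnorm : ∑ i, v i = (n : ℝ))
    (w : Fin n → ℝ) (hw : C.mulVec w = w) :
    ∃ c : ℝ, w = c • v := by
  classical
  set ones : Fin n → ℝ := fun _ => 1 with hones
  have hones_ne : ones ≠ 0 := by
    intro h
    have := congrFun h ⟨0, hn⟩
    simp [hones] at this
  -- transpose is row-stochastic irreducible
  have hTfix : ∀ y : Fin n → ℝ, Cᵀ.mulVec y = y → ∀ i j, y i = y j := by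
    intro y hy
    apply consensus_of_fixed Cᵀ (fun i j => hnn j i)
      (fun i => by simp [Matrix.transpose_apply, hcol i])
    · intro i j hij
      have h := Relation.TransGen.swap _ _ (hirr j i (Ne.symm hij))
      exact h
    · intro i
      have := congrFun hy i
      rw [← this]
      simp [Matrix.mulVec, dotProduct]
  -- ker of (Cᵀ - 1) is span of ones
  have hkermem : ∀ (A : Matrix (Fin n) (Fin n) ℝ) (y : Fin n → ℝ),
      y ∈ LinearMap.ker (A - 1).mulVecLin ↔ A.mulVec y = y := by
    intro A y
    rw [LinearMap.mem_ker, Matrix.mulVecLin_apply, Matrix.sub_mulVec,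
      Matrix.one_mulVec, sub_eq_zero]
  have hkerT : LinearMap.ker (Cᵀ - 1).mulVecLin = Submodule.span ℝ {ones} := by
    apply le_antisymm
    · intro y hy
      rw [hkermem] at hy
      have hconst := hTfix y hy
      rw [Submodule.mem_span_singleton]
      refine ⟨y ⟨0, hn⟩, ?_⟩
      funext i
      simp [hones, hconst i ⟨0, hn⟩]
    · rw [Submodule.span_singleton_le_iff_mem, hkermem]
      funext i
      simp [Matrix.mulVec, dotProduct, hones, Matrix.transpose_apply, hcol i]
  have hfinT : Module.finrank ℝ (LinearMap.ker (Cᵀ - 1).mulVecLin) = 1 := by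
    rw [hkerT, finrank_span_singleton hones_ne]
  have hrankT : (Cᵀ - 1 : Matrix (Fin n) (Fin n) ℝ).rank + 1 = n := by
    have := LinearMap.finrank_range_add_finrank_ker (Cᵀ - 1).mulVecLin
    rw [hfinT] at this
    rw [Matrix.rank]
    simpa using this
  have htr : (Cᵀ - 1 : Matrix (Fin n) (Fin n) ℝ) = (C - 1)ᵀ := by
    rw [Matrix.transpose_sub, Matrix.transpose_one]
  have hrankC : (C - 1 : Matrix (Fin n) (Fin n) ℝ).rank + 1 = n := by
    rw [← Matrix.rank_transpose, ← htr]; exact hrankT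
  have hfinC : Module.finrank ℝ (LinearMap.ker (C - 1).mulVecLin) = 1 := by
    have h2 := LinearMap.finrank_range_add_finrank_ker (C - 1).mulVecLin
    rw [← Matrix.rank] at h2
    simp only [Module.finrank_fintype_fun_eq_card, Fintype.card_fin] at h2
    omega
  have hvne : v ≠ 0 := by
    intro h
    rw [h] at hvnorm
    simp at hvnorm
    have : (n : ℝ) ≠ 0 := Nat.cast_ne_zero.mpr hn.ne'
    exact this hvnorm.symm
  have hvmem : v ∈ LinearMap.ker (C - 1).mulVecLin := (hkermem C v).mpr hv
  have hspan : Submodule.span ℝ {v} = LinearMap.ker (C - 1).mulVecLin := by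
    apply Submodule.eq_of_le_of_finrank_eq
    · rw [Submodule.span_singleton_le_iff_mem]; exact hvmem
    · rw [finrank_span_singleton hvne, hfinC]
  have hwmem : w ∈ Submodule.span ℝ {v} := by
    rw [hspan]; exact (hkermem C w).mpr hw
  obtain ⟨c, hc⟩ := Submodule.mem_span_singleton.mp hwmem
  exact ⟨c, hc.symm⟩

/-- Steady states of the NE seeking algorithm: if
`x = Rx - (α/n)(I ⊗ 1ᵀ)ψ` and `ψ = (C ⊗ I)ψ`, with `R` row-stochastic irreducible
(normalized left eigenvector `u`), `C` column-stochastic irreducible (normalized right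
eigenvector `v`), `α > 0` and `uᵀv ≠ 0`, then `ψ = v ⊗ ψ̄` with `1ᵀψ̄ = 0`, and `x` is
a consensus vector. -/
theorem steady_state_consensus
    (n : ℕ) (hn : 0 < n) (α : ℝ) (hα : 0 < α)
    (R C : Matrix (Fin n) (Fin n) ℝ)
    (hRnonneg : ∀ i j, 0 ≤ R i j) (hRrow : ∀ i, ∑ j, R i j = 1)
    (hRirr : ∀ i j : Fin n, i ≠ j →
      Relation.TransGen (fun a b : Fin n => 0 < R b a) i j)
    (hCnonneg : ∀ i j, 0 ≤ C i j) (hCcol : ∀ j, ∑ i, C i j = 1)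
    (hCirr : ∀ i j : Fin n, i ≠ j →
      Relation.TransGen (fun a b : Fin n => 0 < C b a) i j)
    (u v : Fin n → ℝ)
    (hu : Matrix.vecMul u R = u) (hunorm : ∑ i, u i = (n : ℝ))
    (hv : C.mulVec v = v) (hvnorm : ∑ i, v i = (n : ℝ))
    (huv : ∑ i, u i * v i ≠ 0)
    (x : Fin n → ℝ) (ψ : Fin n × Fin n → ℝ)
    (hxeq : ∀ i, x i = (∑ j, R i j * x j) - (α / (n : ℝ)) * ∑ j, ψ (i, j))
    (hψeq : ∀ i j, ψ (i, j) = ∑ l, C i l * ψ (l, j)) :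
    (∀ i j, ψ (i, j) = v i * ((1 / (n : ℝ)) * ∑ l, ψ (l, j))) ∧
    (∑ j, (1 / (n : ℝ)) * ∑ l, ψ (l, j)) = 0 ∧
    (∃ τ : ℝ, ∀ i, x i = τ) := by
  classical
  have hnR : (n : ℝ) ≠ 0 := Nat.cast_ne_zero.mpr hn.ne'
  -- each column of ψ is a fixed vector of C, hence a multiple of v
  have hc : ∀ j : Fin n, ∃ c : ℝ, (fun l => ψ (l, j)) = c • v := by
    intro j
    apply fixed_eq_smul hn C hCnonneg hCcol hCirr v hv hvnorm
    funext i
    simp only [Matrix.mulVec, dotProduct]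
    exact (hψeq i j).symm
  choose c hc using hc
  have hψc : ∀ i j, ψ (i, j) = c j * v i := by
    intro i j
    have := congrFun (hc j) i
    simpa using this
  have hbar : ∀ j : Fin n, (1 / (n : ℝ)) * ∑ l, ψ (l, j) = c j := by
    intro j
    have : ∑ l, ψ (l, j) = c j * (n : ℝ) := by
      simp_rw [hψc]
      rw [← Finset.mul_sum, hvnorm]
    rw [this]
    field_simp
  have hcsum : ∑ j, c j = 0 := by
    have hS : ∑ i, u i * x i
        = ∑ i, u i * x i - (α / (n : ℝ)) * ((∑ i, u i * v i) * ∑ j, c j) := by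
      calc ∑ i, u i * x i
          = ∑ i, u i * ((∑ j, R i j * x j) - (α / (n : ℝ)) * ∑ j, ψ (i, j)) := by
            simp_rw [← hxeq]
        _ = (∑ i, ∑ j, u i * (R i j * x j))
            - ∑ i, u i * ((α / (n : ℝ)) * ∑ j, ψ (i, j)) := by
            simp_rw [mul_sub, Finset.sum_sub_distrib, Finset.mul_sum]
        _ = (∑ j, (∑ i, u i * R i j) * x j)
            - (α / (n : ℝ)) * ∑ i, u i * ∑ j, ψ (i, j) := by
            rw [Finset.sum_comm]
            congr 1
            · apply Finset.sum_congr rfl; intro j _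
              rw [Finset.sum_mul]; apply Finset.sum_congr rfl; intro i _; ring
            · rw [Finset.mul_sum]; apply Finset.sum_congr rfl; intro i _; ring
        _ = ∑ i, u i * x i - (α / (n : ℝ)) * ((∑ i, u i * v i) * ∑ j, c j) := by
            congr 1
            · apply Finset.sum_congr rfl; intro j _
              have : ∑ i, u i * R i j = u j := congrFun hu j
              rw [this]
            · congr 1
              rw [Finset.sum_mul]
              apply Finset.sum_congr rfl; intro i _
              simp_rw [hψc]
              rw [← Finset.sum_mul]
              ring
    have h0 : (α / (n : ℝ)) * ((∑ i, u i * v i) * ∑ j, c j) = 0 := by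
      linarith [hS]
    have hαn : α / (n : ℝ) ≠ 0 := div_ne_zero hα.ne' hnR
    have := (mul_eq_zero.mp h0).resolve_left hαn
    exact (mul_eq_zero.mp this).resolve_left huv
  refine ⟨?_, ?_, ?_⟩
  · intro i j
    rw [hbar j, hψc i j, mul_comm]
  · -- sum of c j is zero
    simp_rw [hbar]
    exact hcsum
  · -- x is fixed by R, hence constant
    have hxfix : ∀ i, x i = ∑ j, R i j * x j := by
      intro i
      have hz : ∑ j, ψ (i, j) = 0 := by
        simp_rw [hψc]
        rw [← Finset.sum_mul, hcsum, zero_mul]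
      rw [hxeq i, hz, mul_zero, sub_zero]
    have hconst := consensus_of_fixed R hRnonneg hRrow hRirr x hxfix
    exact ⟨x ⟨0, hn⟩, fun i => hconst i ⟨0, hn⟩⟩
end
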